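/- Let n be a natural number and consider the action of the symmetric group on Fin n on D_n by permuting input variables. If T is a finite set of monotone Boolean functions of n variables containing exactly one representative from each orbit of this action, then d_{n+1} = Σ_{r ∈ T} γ(r) · |{g ∈ D_n : r ≤ g}|, where γ(r) is the cardinality of the orbit of r. -/

import Mathlib

/-- `D_n`, the poset of monotone Boolean functions of `n` variables. -/
abbrev DedekindPoset (n : ℕ) : Type := (Fin n → Bool) →o Bool

/-- The action of a permutation `π` of the variables on `f ∈ D_n`:
`(π·f)(x) = f(x ∘ π)`, which is again monotone. -/
def permAct {n : ℕ} (π : Equiv.Perm (Fin n)) (f : DedekindPoset n) : DedekindPoset n :=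
  ⟨fun x => f (x ∘ π), fun _ _ h => f.monotone (fun i => h (π i))⟩

namespace DedekindAux

instance (n : ℕ) : Finite (DedekindPoset n) :=
  Finite.of_injective (fun f => (f : (Fin n → Bool) → Bool)) DFunLike.coe_injective

lemma permAct_mul {n : ℕ} (π σ : Equiv.Perm (Fin n)) (f : DedekindPoset n) :
    permAct π (permAct σ f) = permAct (π * σ) f := rfl

lemma permAct_one {n : ℕ} (f : DedekindPoset n) : permAct 1 f = f := rfl

lemma permAct_cancel {n : ℕ} {π : Equiv.Perm (Fin n)} {f g : DedekindPoset n}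
    (h : permAct π f = g) : permAct π⁻¹ g = f := by
  rw [← h, permAct_mul, inv_mul_cancel, permAct_one]

lemma permAct_mono {n : ℕ} (π : Equiv.Perm (Fin n)) {f g : DedekindPoset n}
    (h : f ≤ g) : permAct π f ≤ permAct π g := fun x => h (x ∘ π)

/-- Orbit-equivalent functions have the same number of upper bounds. -/
noncomputable def upperEquiv {n : ℕ} (π : Equiv.Perm (Fin n)) {f r : DedekindPoset n}
    (hπ : permAct π f = r) :
    {g : DedekindPoset n // f ≤ g} ≃ {g : DedekindPoset n // r ≤ g} where
  toFun g := ⟨permAct π g.1, by rw [← hπ]; exact permAct_mono π g.2⟩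
  invFun g := ⟨permAct π⁻¹ g.1, by
    rw [← permAct_cancel hπ]; exact permAct_mono π⁻¹ g.2⟩
  left_inv g := by
    ext1
    show permAct π⁻¹ (permAct π g.1) = g.1
    rw [permAct_mul, inv_mul_cancel, permAct_one]
  right_inv g := by
    ext1
    show permAct π (permAct π⁻¹ g.1) = g.1
    rw [permAct_mul, mul_inv_cancel, permAct_one]

/-- Monotonicity of `Fin.snoc` in the tuple argument. -/
lemma snoc_mono {n : ℕ} {a b : Fin n → Bool} (h : a ≤ b) (c : Bool) :
    (Fin.snoc a c : Fin (n + 1) → Bool) ≤ Fin.snoc b c := by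
  intro i
  induction i using Fin.lastCases with
  | last => simp
  | cast i => simpa using h i

/-- Decomposition of `D_(n+1)` as pairs `(f₀, f₁)` in `D_n` with `f₀ ≤ f₁`. -/
noncomputable def pairEquiv (n : ℕ) :
    DedekindPoset (n + 1) ≃ {p : DedekindPoset n × DedekindPoset n // p.1 ≤ p.2} where
  toFun h := ⟨(⟨fun x => h (Fin.snoc x false), fun _ _ hab => h.monotone (snoc_mono hab false)⟩,
               ⟨fun x => h (Fin.snoc x true), fun _ _ hab => h.monotone (snoc_mono hab true)⟩),
              fun x => h.monotone (by
                intro i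
                induction i using Fin.lastCases with
                | last => simp
                | cast i => simp)⟩
  invFun p := ⟨fun y => cond (y (Fin.last n)) (p.1.2 (Fin.init y)) (p.1.1 (Fin.init y)), by
    intro y y' hy
    dsimp only
    have hinit : Fin.init y ≤ Fin.init y' := fun i => hy (Fin.castSucc i)
    have hl := hy (Fin.last n)
    cases h1 : y (Fin.last n) <;> cases h2 : y' (Fin.last n) <;>
      rw [h1, h2] at hl <;> simp only [cond_false, cond_true]
    · exact p.1.1.monotone hinit
    · exact le_trans (p.1.1.monotone hinit) (p.2 _)
    · exact absurd hl (by simp)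
    · exact p.1.2.monotone hinit⟩
  left_inv h := by
    ext y
    show cond (y (Fin.last n)) (h (Fin.snoc (Fin.init y) true)) (h (Fin.snoc (Fin.init y) false)) = h y
    cases hy : y (Fin.last n) <;> simp only [cond_false, cond_true] <;>
      exact congrArg h (by rw [← hy, Fin.snoc_init_self])
  right_inv p := by
    ext1
    refine Prod.ext ?_ ?_ <;> ext x
    · show cond ((Fin.snoc x false : Fin (n+1) → Bool) (Fin.last n)) (p.1.2 (Fin.init (Fin.snoc x false : Fin (n+1) → Bool))) (p.1.1 (Fin.init (Fin.snoc x false : Fin (n+1) → Bool))) = p.1.1 x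
      simp [Fin.init_snoc]
    · show cond ((Fin.snoc x true : Fin (n+1) → Bool) (Fin.last n)) (p.1.2 (Fin.init (Fin.snoc x true : Fin (n+1) → Bool))) (p.1.1 (Fin.init (Fin.snoc x true : Fin (n+1) → Bool))) = p.1.2 x
      simp [Fin.init_snoc]

theorem key (n : ℕ) (T : Finset (DedekindPoset n))
    (hT : ∀ f : DedekindPoset n, ∃! r, r ∈ T ∧ ∃ π : Equiv.Perm (Fin n), permAct π f = r) :
    Nat.card (DedekindPoset (n + 1)) =
      ∑ r ∈ T, Nat.card {g : DedekindPoset n // ∃ π : Equiv.Perm (Fin n), permAct π r = g} *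
        Nat.card {g : DedekindPoset n // r ≤ g} := by
  classical
  have : Fintype (DedekindPoset n) := Fintype.ofFinite _
  -- representative function
  set R : DedekindPoset n → DedekindPoset n := fun f => (hT f).exists.choose with hR
  have hRspec : ∀ f, R f ∈ T ∧ ∃ π, permAct π f = R f := fun f => (hT f).exists.choose_spec
  have hRuniq : ∀ f r, r ∈ T → (∃ π, permAct π f = r) → R f = r := by
    intro f r hr hπ
    exact ((hT f).unique (hRspec f) ⟨hr, hπ⟩)
  have hRiff : ∀ r ∈ T, ∀ f, R f = r ↔ ∃ π, permAct π r = f := by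
    intro r hr f
    constructor
    · rintro rfl
      obtain ⟨π, hπ⟩ := (hRspec f).2
      exact ⟨π⁻¹, permAct_cancel hπ⟩
    · rintro ⟨π, hπ⟩
      exact hRuniq f r hr ⟨π⁻¹, permAct_cancel hπ⟩
  -- counting
  have h1 : Nat.card (DedekindPoset (n + 1)) =
      ∑ f : DedekindPoset n, Nat.card {g : DedekindPoset n // f ≤ g} := by
    rw [Nat.card_congr ((pairEquiv n).trans
      (Equiv.subtypeProdEquivSigmaSubtype (fun (a b : DedekindPoset n) => a ≤ b)))]
    rw [Nat.card_eq_fintype_card, Fintype.card_sigma]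
    exact Finset.sum_congr rfl fun f _ => (Nat.card_eq_fintype_card).symm
  rw [h1, ← Finset.sum_fiberwise_of_maps_to (g := R) (t := T)
    (fun f _ => (hRspec f).1)]
  refine Finset.sum_congr rfl fun r hr => ?_
  have hconst : ∀ f ∈ Finset.univ.filter (fun f => R f = r),
      Nat.card {g : DedekindPoset n // f ≤ g} = Nat.card {g : DedekindPoset n // r ≤ g} := by
    intro f hf
    rw [Finset.mem_filter] at hf
    obtain ⟨π, hπ⟩ := ((hRiff r hr f).mp hf.2)
    exact (Nat.card_congr (upperEquiv π hπ)).symm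
  rw [Finset.sum_congr rfl hconst, Finset.sum_const, smul_eq_mul]
  congr 1
  rw [Nat.card_eq_fintype_card, Fintype.card_subtype]
  congr 1
  ext f
  simp [hRiff r hr f]

end DedekindAux

/-- If `T` contains exactly one representative from each orbit of the action of
the symmetric group on `D_n`, then `d_(n+1) = Σ_{r ∈ T} γ(r) · #{g : r ≤ g}`,
where `γ(r)` is the orbit size of `r`. -/
theorem dedekind_succ_eq_sum_over_representatives (n : ℕ) (T : Finset (DedekindPoset n))
    (hT : ∀ f : DedekindPoset n, ∃! r, r ∈ T ∧ ∃ π : Equiv.Perm (Fin n), permAct π f = r) :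
    Nat.card (DedekindPoset (n + 1)) =
      ∑ r ∈ T, Nat.card {g : DedekindPoset n // ∃ π : Equiv.Perm (Fin n), permAct π r = g} *
        Nat.card {g : DedekindPoset n // r ≤ g} := by
  exact DedekindAux.key n T hT
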